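/- There does not exist a 4-dimensional random vector V such that for every unit vector a ∈ ℝ^4, the random variable a · V is uniformly distributed on [-1, 1]. -/

import Mathlib

open MeasureTheory
open scoped RealInnerProductSpace

noncomputable def uniformIcc (a b : ℝ) : Measure ℝ :=
  (ENNReal.ofReal (b - a))⁻¹ • volume.restrict (Set.Icc a b)

open intervalIntegral in
lemma integral_pow_uniform (n : ℕ) :
    ∫ x, x ^ n ∂(uniformIcc (-1) 1) = (1 - (-1:ℝ)^(n+1)) / (2*(n+1)) := by
  rw [uniformIcc, MeasureTheory.integral_smul_measure]
  have h1 : ∫ x in Set.Icc (-1:ℝ) 1, x ^ n = (1 - (-1:ℝ)^(n+1)) / (n+1) := by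
    rw [MeasureTheory.integral_Icc_eq_integral_Ioc,
      ← integral_of_le (by norm_num : (-1:ℝ) ≤ 1), integral_pow]
    norm_num
  rw [h1]
  have h2 : ((ENNReal.ofReal (1 - -1))⁻¹).toReal = 1/2 := by
    rw [ENNReal.toReal_inv, ENNReal.toReal_ofReal (by norm_num)]
    norm_num
  rw [smul_eq_mul, h2]
  have h3 : ((n:ℝ)+1) ≠ 0 := by positivity
  field_simp

theorem no_archimedes_dim_four :
    ¬ ∃ (Ω : Type) (_ : MeasurableSpace Ω) (μ : Measure Ω) (_ : IsProbabilityMeasure μ)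
      (V : Ω → EuclideanSpace ℝ (Fin 4)), Measurable V ∧
      ∀ a : EuclideanSpace ℝ (Fin 4), ‖a‖ = 1 →
        Measure.map (fun ω => ⟪a, V ω⟫) μ = uniformIcc (-1) 1 := by
  rintro ⟨Ω, mΩ, μ, hμ, V, hV, hlaw⟩
  have hmeas : ∀ a : EuclideanSpace ℝ (Fin 4), Measurable fun ω => ⟪a, V ω⟫ :=
    fun a => measurable_const.inner hV
  -- moments of projections
  have hmom : ∀ a, ‖a‖ = 1 → ∀ n : ℕ,
      ∫ ω, ⟪a, V ω⟫ ^ n ∂μ = (1 - (-1:ℝ)^(n+1))/(2*(n+1)) := by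
    intro a ha n
    have h := MeasureTheory.integral_map (μ := μ) (φ := fun ω => ⟪a, V ω⟫)
      (f := fun x => x ^ n) (hmeas a).aemeasurable
      ((measurable_id.pow_const n).aestronglyMeasurable)
    rw [hlaw a ha, integral_pow_uniform] at h
    exact h.symm
  -- a.e. bound on projections
  have hbound : ∀ a, ‖a‖ = 1 → ∀ᵐ ω ∂μ, |⟪a, V ω⟫| ≤ 1 := by
    intro a ha
    have hset : MeasurableSet {x : ℝ | ¬ |x| ≤ 1} :=
      (measurableSet_le measurable_abs measurable_const).compl
    have h0 : μ ((fun ω => ⟪a, V ω⟫) ⁻¹' {x : ℝ | ¬ |x| ≤ 1}) = 0 := by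
      rw [← Measure.map_apply (hmeas a) hset, hlaw a ha, uniformIcc,
        Measure.smul_apply, Measure.restrict_apply hset]
      have he : {x : ℝ | ¬ |x| ≤ 1} ∩ Set.Icc (-1) 1 = ∅ :=
        Set.eq_empty_iff_forall_notMem.2 (fun x hx => hx.1 (abs_le.2 hx.2))
      rw [he]
      simp
    exact (ae_iff).2 h0
  -- basis vectors and coordinates
  set e : Fin 4 → EuclideanSpace ℝ (Fin 4) := fun i => EuclideanSpace.single i 1 with he'
  set X : Fin 4 → Ω → ℝ := fun i ω => ⟪e i, V ω⟫ with hX'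
  have hnorme : ∀ i, ‖e i‖ = 1 := fun i => by
    simp [he', EuclideanSpace.norm_single]
  have hXmeas : ∀ i, Measurable (X i) := fun i => hmeas (e i)
  have hXbd : ∀ i, ∀ᵐ ω ∂μ, |X i ω| ≤ 1 := fun i => hbound (e i) (hnorme i)
  -- integrability helper
  have hint : ∀ (C : ℝ) (f : Ω → ℝ), Measurable f → (∀ᵐ ω ∂μ, |f ω| ≤ C) →
      Integrable f μ := fun C f hf hb =>
    (integrable_const C).mono' hf.aestronglyMeasurable
      (by simpa [Real.norm_eq_abs] using hb)
  have hIntMono : ∀ (i j : Fin 4) (m k : ℕ),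
      Integrable (fun ω => X i ω ^ m * X j ω ^ k) μ := by
    intro i j m k
    apply hint 1 _ (((hXmeas i).pow_const m).mul ((hXmeas j).pow_const k))
    filter_upwards [hXbd i, hXbd j] with ω h1 h2
    show |X i ω ^ m * X j ω ^ k| ≤ 1
    rw [abs_mul, abs_pow, abs_pow]
    calc |X i ω| ^ m * |X j ω| ^ k ≤ 1 ^ m * 1 ^ k := by
          apply mul_le_mul (pow_le_pow_left₀ (abs_nonneg _) h1 m)
            (pow_le_pow_left₀ (abs_nonneg _) h2 k) (by positivity) (by positivity)
      _ = 1 := by norm_num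
  -- second and fourth moments
  have h2m : ∀ i, ∫ ω, X i ω ^ 2 ∂μ = 1/3 := fun i => by
    have h := hmom (e i) (hnorme i) 2; rw [hX']; rw [h]; norm_num
  have h4m : ∀ i, ∫ ω, X i ω ^ 4 ∂μ = 1/5 := fun i => by
    have h := hmom (e i) (hnorme i) 4; rw [hX']; rw [h]; norm_num
  have hIntP : ∀ (i : Fin 4) (m : ℕ), Integrable (fun ω => X i ω ^ m) μ := by
    intro i m
    apply hint 1 _ ((hXmeas i).pow_const m)
    filter_upwards [hXbd i] with ω h1
    rw [abs_pow]
    exact pow_le_one₀ (abs_nonneg _) h1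
  -- cross moments
  have hcross : ∀ i j : Fin 4, i ≠ j → ∫ ω, X i ω ^ 2 * X j ω ^ 2 ∂μ = 1/15 := by
    intro i j hij
    have hinner : ⟪e i, e j⟫ = 0 := by
      simp [he', EuclideanSpace.inner_single_left, EuclideanSpace.single_apply]
      exact fun h => hij h
    set c : ℝ := (Real.sqrt 2)⁻¹ with hc
    have hs2 : (0:ℝ) < Real.sqrt 2 := Real.sqrt_pos.2 (by norm_num)
    have hsq : Real.sqrt 2 ^ 2 = 2 := Real.sq_sqrt (by norm_num)
    have hnp : ‖e i + e j‖ = Real.sqrt 2 := by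
      rw [← Real.sqrt_sq (norm_nonneg _), norm_add_sq_real, hnorme i, hnorme j, hinner]
      norm_num
    have hnm : ‖e i - e j‖ = Real.sqrt 2 := by
      rw [← Real.sqrt_sq (norm_nonneg _), norm_sub_sq_real, hnorme i, hnorme j, hinner]
      norm_num
    have hcnorm : ‖c‖ = c := by
      rw [Real.norm_eq_abs, abs_of_pos (inv_pos.2 hs2)]
    have hup : ‖c • (e i + e j)‖ = 1 := by
      rw [norm_smul, hnp, hcnorm, hc]
      exact inv_mul_cancel₀ hs2.ne'
    have hum : ‖c • (e i - e j)‖ = 1 := by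
      rw [norm_smul, hnm, hcnorm, hc]
      exact inv_mul_cancel₀ hs2.ne'
    have hc4 : c ^ 4 = 1/4 := by
      rw [hc, inv_pow, show (4:ℕ) = 2*2 from rfl, pow_mul, hsq]
      norm_num
    have hip : ∀ ω, ⟪c • (e i + e j), V ω⟫ = c * (X i ω + X j ω) := fun ω => by
      rw [real_inner_smul_left, inner_add_left]
    have him : ∀ ω, ⟪c • (e i - e j), V ω⟫ = c * (X i ω - X j ω) := fun ω => by
      rw [real_inner_smul_left, inner_sub_left]
    have hPsum : ∫ ω, (X i ω + X j ω)^4 ∂μ = 4/5 := by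
      have h := hmom _ hup 4
      simp only [hip, mul_pow] at h
      rw [integral_const_mul, hc4] at h
      norm_num at h
      linarith
    have hMsum : ∫ ω, (X i ω - X j ω)^4 ∂μ = 4/5 := by
      have h := hmom _ hum 4
      simp only [him, mul_pow] at h
      rw [integral_const_mul, hc4] at h
      norm_num at h
      linarith
    have hIp : Integrable (fun ω => (X i ω + X j ω)^4) μ := by
      apply hint 16 _ (((hXmeas i).add (hXmeas j)).pow_const 4)
      filter_upwards [hXbd i, hXbd j] with ω h1 h2
      rw [abs_pow]
      calc |X i ω + X j ω|^4 ≤ 2^4 := by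
            apply pow_le_pow_left₀ (abs_nonneg _)
            calc |X i ω + X j ω| ≤ |X i ω| + |X j ω| := abs_add_le _ _
              _ ≤ 2 := by linarith
        _ = 16 := by norm_num
    have hIm : Integrable (fun ω => (X i ω - X j ω)^4) μ := by
      apply hint 16 _ (((hXmeas i).sub (hXmeas j)).pow_const 4)
      filter_upwards [hXbd i, hXbd j] with ω h1 h2
      rw [abs_pow]
      calc |X i ω - X j ω|^4 ≤ 2^4 := by
            apply pow_le_pow_left₀ (abs_nonneg _)
            calc |X i ω - X j ω| ≤ |X i ω| + |X j ω| := abs_sub _ _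
              _ ≤ 2 := by linarith
        _ = 16 := by norm_num
    have key : ∫ ω, ((X i ω + X j ω)^4 + (X i ω - X j ω)^4) ∂μ = 8/5 := by
      rw [integral_add hIp hIm, hPsum, hMsum]; norm_num
    have hre : (fun ω => (X i ω + X j ω)^4 + (X i ω - X j ω)^4)
        = fun ω => 2 * X i ω^4 + 12 * (X i ω^2 * X j ω^2) + 2 * X j ω^4 := by
      funext ω; ring
    rw [hre] at key
    have IA : Integrable (fun ω => 2 * X i ω^4) μ := (hIntP i 4).const_mul 2
    have IB : Integrable (fun ω => 12 * (X i ω^2 * X j ω^2)) μ :=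
      (hIntMono i j 2 2).const_mul 12
    have IC : Integrable (fun ω => 2 * X j ω^4) μ := (hIntP j 4).const_mul 2
    have IAB : Integrable (fun ω => 2 * X i ω^4 + 12 * (X i ω^2 * X j ω^2)) μ := IA.add IB
    rw [integral_add IAB IC, integral_add IA IB, integral_const_mul,
      integral_const_mul, integral_const_mul, h4m i, h4m j] at key
    linarith
  -- the final contradiction
  have hnn : 0 ≤ ∫ ω, (X 0 ω^2 + X 1 ω^2 + X 2 ω^2 + X 3 ω^2 - 4/3)^2 ∂μ :=
    integral_nonneg fun ω => sq_nonneg _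
  have hval : ∫ ω, (X 0 ω^2 + X 1 ω^2 + X 2 ω^2 + X 3 ω^2 - 4/3)^2 ∂μ = -8/45 := by
    have hre : (fun ω => (X 0 ω^2 + X 1 ω^2 + X 2 ω^2 + X 3 ω^2 - 4/3)^2)
        = fun ω => (((((((((((((X 0 ω^4 + X 1 ω^4) + X 2 ω^4) + X 3 ω^4)
          + 2*(X 0 ω^2 * X 1 ω^2)) + 2*(X 0 ω^2 * X 2 ω^2)) + 2*(X 0 ω^2 * X 3 ω^2))
          + 2*(X 1 ω^2 * X 2 ω^2)) + 2*(X 1 ω^2 * X 3 ω^2)) + 2*(X 2 ω^2 * X 3 ω^2))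
          + (-8/3)*(X 0 ω^2)) + (-8/3)*(X 1 ω^2)) + (-8/3)*(X 2 ω^2)) + (-8/3)*(X 3 ω^2))
          + (16/9 : ℝ) := by
      funext ω; ring
    rw [hre]
    have J0 : Integrable (fun ω => X 0 ω ^ 4) μ := hIntP 0 4
    have J1 : Integrable (fun ω => (X 0 ω ^ 4) + X 1 ω ^ 4) μ := J0.add (hIntP 1 4)
    have J2 : Integrable (fun ω => ((X 0 ω ^ 4) + X 1 ω ^ 4) + X 2 ω ^ 4) μ := J1.add (hIntP 2 4)
    have J3 : Integrable (fun ω => (((X 0 ω ^ 4) + X 1 ω ^ 4) + X 2 ω ^ 4) + X 3 ω ^ 4) μ := J2.add (hIntP 3 4)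
    have J4 : Integrable (fun ω => ((((X 0 ω ^ 4) + X 1 ω ^ 4) + X 2 ω ^ 4) + X 3 ω ^ 4) + 2*(X 0 ω ^ 2 * X 1 ω ^ 2)) μ := J3.add ((hIntMono 0 1 2 2).const_mul 2)
    have J5 : Integrable (fun ω => (((((X 0 ω ^ 4) + X 1 ω ^ 4) + X 2 ω ^ 4) + X 3 ω ^ 4) + 2*(X 0 ω ^ 2 * X 1 ω ^ 2)) + 2*(X 0 ω ^ 2 * X 2 ω ^ 2)) μ := J4.add ((hIntMono 0 2 2 2).const_mul 2)
    have J6 : Integrable (fun ω => ((((((X 0 ω ^ 4) + X 1 ω ^ 4) + X 2 ω ^ 4) + X 3 ω ^ 4) + 2*(X 0 ω ^ 2 * X 1 ω ^ 2)) + 2*(X 0 ω ^ 2 * X 2 ω ^ 2)) + 2*(X 0 ω ^ 2 * X 3 ω ^ 2)) μ := J5.add ((hIntMono 0 3 2 2).const_mul 2)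
    have J7 : Integrable (fun ω => (((((((X 0 ω ^ 4) + X 1 ω ^ 4) + X 2 ω ^ 4) + X 3 ω ^ 4) + 2*(X 0 ω ^ 2 * X 1 ω ^ 2)) + 2*(X 0 ω ^ 2 * X 2 ω ^ 2)) + 2*(X 0 ω ^ 2 * X 3 ω ^ 2)) + 2*(X 1 ω ^ 2 * X 2 ω ^ 2)) μ := J6.add ((hIntMono 1 2 2 2).const_mul 2)
    have J8 : Integrable (fun ω => ((((((((X 0 ω ^ 4) + X 1 ω ^ 4) + X 2 ω ^ 4) + X 3 ω ^ 4) + 2*(X 0 ω ^ 2 * X 1 ω ^ 2)) + 2*(X 0 ω ^ 2 * X 2 ω ^ 2)) + 2*(X 0 ω ^ 2 * X 3 ω ^ 2)) + 2*(X 1 ω ^ 2 * X 2 ω ^ 2)) + 2*(X 1 ω ^ 2 * X 3 ω ^ 2)) μ := J7.add ((hIntMono 1 3 2 2).const_mul 2)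
    have J9 : Integrable (fun ω => (((((((((X 0 ω ^ 4) + X 1 ω ^ 4) + X 2 ω ^ 4) + X 3 ω ^ 4) + 2*(X 0 ω ^ 2 * X 1 ω ^ 2)) + 2*(X 0 ω ^ 2 * X 2 ω ^ 2)) + 2*(X 0 ω ^ 2 * X 3 ω ^ 2)) + 2*(X 1 ω ^ 2 * X 2 ω ^ 2)) + 2*(X 1 ω ^ 2 * X 3 ω ^ 2)) + 2*(X 2 ω ^ 2 * X 3 ω ^ 2)) μ := J8.add ((hIntMono 2 3 2 2).const_mul 2)
    have J10 : Integrable (fun ω => ((((((((((X 0 ω ^ 4) + X 1 ω ^ 4) + X 2 ω ^ 4) + X 3 ω ^ 4) + 2*(X 0 ω ^ 2 * X 1 ω ^ 2)) + 2*(X 0 ω ^ 2 * X 2 ω ^ 2)) + 2*(X 0 ω ^ 2 * X 3 ω ^ 2)) + 2*(X 1 ω ^ 2 * X 2 ω ^ 2)) + 2*(X 1 ω ^ 2 * X 3 ω ^ 2)) + 2*(X 2 ω ^ 2 * X 3 ω ^ 2)) + (-8/3)*(X 0 ω ^ 2)) μ := J9.add ((hIntP 0 2).const_mul (-8/3))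
    have J11 : Integrable (fun ω => (((((((((((X 0 ω ^ 4) + X 1 ω ^ 4) + X 2 ω ^ 4) + X 3 ω ^ 4) + 2*(X 0 ω ^ 2 * X 1 ω ^ 2)) + 2*(X 0 ω ^ 2 * X 2 ω ^ 2)) + 2*(X 0 ω ^ 2 * X 3 ω ^ 2)) + 2*(X 1 ω ^ 2 * X 2 ω ^ 2)) + 2*(X 1 ω ^ 2 * X 3 ω ^ 2)) + 2*(X 2 ω ^ 2 * X 3 ω ^ 2)) + (-8/3)*(X 0 ω ^ 2)) + (-8/3)*(X 1 ω ^ 2)) μ := J10.add ((hIntP 1 2).const_mul (-8/3))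
    have J12 : Integrable (fun ω => ((((((((((((X 0 ω ^ 4) + X 1 ω ^ 4) + X 2 ω ^ 4) + X 3 ω ^ 4) + 2*(X 0 ω ^ 2 * X 1 ω ^ 2)) + 2*(X 0 ω ^ 2 * X 2 ω ^ 2)) + 2*(X 0 ω ^ 2 * X 3 ω ^ 2)) + 2*(X 1 ω ^ 2 * X 2 ω ^ 2)) + 2*(X 1 ω ^ 2 * X 3 ω ^ 2)) + 2*(X 2 ω ^ 2 * X 3 ω ^ 2)) + (-8/3)*(X 0 ω ^ 2)) + (-8/3)*(X 1 ω ^ 2)) + (-8/3)*(X 2 ω ^ 2)) μ := J11.add ((hIntP 2 2).const_mul (-8/3))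
    have J13 : Integrable (fun ω => (((((((((((((X 0 ω ^ 4) + X 1 ω ^ 4) + X 2 ω ^ 4) + X 3 ω ^ 4) + 2*(X 0 ω ^ 2 * X 1 ω ^ 2)) + 2*(X 0 ω ^ 2 * X 2 ω ^ 2)) + 2*(X 0 ω ^ 2 * X 3 ω ^ 2)) + 2*(X 1 ω ^ 2 * X 2 ω ^ 2)) + 2*(X 1 ω ^ 2 * X 3 ω ^ 2)) + 2*(X 2 ω ^ 2 * X 3 ω ^ 2)) + (-8/3)*(X 0 ω ^ 2)) + (-8/3)*(X 1 ω ^ 2)) + (-8/3)*(X 2 ω ^ 2)) + (-8/3)*(X 3 ω ^ 2)) μ := J12.add ((hIntP 3 2).const_mul (-8/3))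
    rw [integral_add J13 (integrable_const _),
      integral_add J12 ((hIntP 3 2).const_mul (-8/3)),
      integral_add J11 ((hIntP 2 2).const_mul (-8/3)),
      integral_add J10 ((hIntP 1 2).const_mul (-8/3)),
      integral_add J9 ((hIntP 0 2).const_mul (-8/3)),
      integral_add J8 ((hIntMono 2 3 2 2).const_mul 2),
      integral_add J7 ((hIntMono 1 3 2 2).const_mul 2),
      integral_add J6 ((hIntMono 1 2 2 2).const_mul 2),
      integral_add J5 ((hIntMono 0 3 2 2).const_mul 2),
      integral_add J4 ((hIntMono 0 2 2 2).const_mul 2),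
      integral_add J3 ((hIntMono 0 1 2 2).const_mul 2),
      integral_add J2 (hIntP 3 4),
      integral_add J1 (hIntP 2 4),
      integral_add J0 (hIntP 1 4)]
    simp only [integral_const_mul]
    rw [h4m 0, h4m 1, h4m 2, h4m 3, h2m 0, h2m 1, h2m 2, h2m 3,
      hcross 0 1 (by decide), hcross 0 2 (by decide), hcross 0 3 (by decide),
      hcross 1 2 (by decide), hcross 1 3 (by decide), hcross 2 3 (by decide),
      integral_const]
    simp [measure_univ]
    norm_num
  rw [hval] at hnn
  norm_num at hnn
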